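/- Let G be a just non-Dedekind (JND) group with nontrivial center Z(G) ≠ 1. Then G is a solvable just nonabelian (JNA) group; in particular, G is nonabelian, G/N is abelian for every nontrivial normal subgroup N of G, and G is solvable. -/

import Mathlib

/-- A group is Dedekind if every subgroup of it is normal. -/
def IsDedekind (G : Type*) [Group G] : Prop := ∀ H : Subgroup G, H.Normal


/-- A group is just non-Dedekind (JND) if it is not Dedekind but every quotient
by a nontrivial normal subgroup is Dedekind. -/
def IsJND (G : Type*) [Group G] : Prop :=
  ¬ IsDedekind G ∧
    ∀ (N : Subgroup G) (hN : N.Normal), N ≠ ⊥ →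
      letI := hN
      IsDedekind (G ⧸ N)

/-- A group is just nonabelian (JNA) if it is nonabelian but every quotient
by a nontrivial normal subgroup is abelian. -/
def IsJNA (G : Type*) [Group G] : Prop :=
  (∃ a b : G, a * b ≠ b * a) ∧
    ∀ (N : Subgroup G) (hN : N.Normal), N ≠ ⊥ →
      letI := hN
      ∀ x y : G ⧸ N, x * y = y * x

namespace JNDAux

open Subgroup

variable {Q : Type*} [Group Q]

lemma isOfFinOrder_of_zpow {x : Q} {n : ℤ} (hn : n ≠ 0) (h : x ^ n = 1) : IsOfFinOrder x := by
  refine isOfFinOrder_iff_pow_eq_one.mpr ⟨n.natAbs, Int.natAbs_pos.mpr hn, ?_⟩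
  have h2 : x ^ ((n.natAbs : ℤ)) = 1 := by
    rcases Int.natAbs_eq n with he | he
    · rw [← he, h]
    · rw [show ((n.natAbs : ℤ)) = -n by omega, zpow_neg, h, inv_one]
  rw [← zpow_natCast]; exact h2

lemma central_zpowers_normal {s : Q} (h : s ∈ Subgroup.center Q) :
    (Subgroup.zpowers s).Normal := by
  constructor
  intro n hn g
  have hc : n ∈ Subgroup.center Q := Subgroup.zpowers_le.mpr h hn
  have h2 : g * n * g⁻¹ = n := by
    rw [Subgroup.mem_center_iff.mp hc g, mul_assoc, mul_inv_cancel, mul_one]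
  rwa [h2]

section Ded

variable (hQ : IsDedekind Q)
include hQ

lemma conj_mem_zp (x g : Q) : g * x * g⁻¹ ∈ Subgroup.zpowers x :=
  (hQ (Subgroup.zpowers x)).conj_mem x (Subgroup.mem_zpowers x) g

/-- Basic commutator relations in a Dedekind group. -/
lemma pair_rel (x w : Q) (hc : w * x * w⁻¹ * x⁻¹ ≠ 1) :
    ∃ a b : ℤ, a ≠ 0 ∧ b ≠ 0 ∧ (w*x*w⁻¹*x⁻¹ = x ^ a) ∧ (w*x*w⁻¹*x⁻¹ = w ^ b) ∧
      ((w*x*w⁻¹*x⁻¹) ^ a = 1) ∧ ((w*x*w⁻¹*x⁻¹) ^ b = 1) := by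
  obtain ⟨γ, hγ⟩ := Subgroup.mem_zpowers_iff.mp (conj_mem_zp hQ x w)
  obtain ⟨δ, hδ⟩ := Subgroup.mem_zpowers_iff.mp (conj_mem_zp hQ w x)
  set c := w * x * w⁻¹ * x⁻¹ with hcdef
  have hca : c = x ^ (γ - 1) := by
    rw [zpow_sub_one, hγ, hcdef]
  have hcb : c = w ^ (1 - δ) := by
    have h1 : c⁻¹ = w ^ (δ - 1) := by
      rw [zpow_sub_one, hδ, hcdef]; group
    rw [← inv_inv c, h1, ← zpow_neg, neg_sub]
  have hcx : Commute c x := by rw [hca]; exact (Commute.refl x).zpow_left _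
  have hcw : Commute c w := by rw [hcb]; exact (Commute.refl w).zpow_left _
  have h2 : w * c * w⁻¹ = c ^ γ := by
    calc w * c * w⁻¹ = (w * x * w⁻¹) ^ (γ - 1) := by rw [hca, conj_zpow]
    _ = (x ^ γ) ^ (γ-1) := by rw [hγ]
    _ = (x ^ (γ-1)) ^ γ := by rw [← zpow_mul, mul_comm, zpow_mul]
    _ = c ^ γ := by rw [← hca]
  have h3 : w * c * w⁻¹ = c := by
    rw [← hcw.eq, mul_assoc, mul_inv_cancel, mul_one]
  have h4 : c ^ (γ - 1) = 1 := by
    have : c ^ γ = c := by rw [← h2, h3]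
    rw [zpow_sub_one, this, mul_inv_cancel]
  have h5 : c ^ (1 - δ) = 1 := by
    have h6 : x * c * x⁻¹ = c ^ δ := by
      calc x * c * x⁻¹ = (x * w * x⁻¹) ^ (1 - δ) := by rw [hcb, conj_zpow]
      _ = (w ^ δ) ^ (1 - δ) := by rw [hδ]
      _ = (w ^ (1 - δ)) ^ δ := by rw [← zpow_mul, mul_comm, zpow_mul]
      _ = c ^ δ := by rw [← hcb]
    have h7 : x * c * x⁻¹ = c := by
      rw [← hcx.eq, mul_assoc, mul_inv_cancel, mul_one]
    have h8 : c ^ δ = c := by rw [← h6, h7]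
    have : c ^ (δ - 1) = 1 := by rw [zpow_sub_one, h8, mul_inv_cancel]
    rw [show (1 - δ) = -(δ - 1) by ring, zpow_neg, this, inv_one]
  refine ⟨γ - 1, 1 - δ, ?_, ?_, hca, hcb, h4, h5⟩
  · intro h0; rw [h0, zpow_zero] at hca; exact hc hca
  · intro h0; rw [h0, zpow_zero] at hcb; exact hc hcb

omit hQ in
/-- product expansion: if `a * w = d * (w * a)` with `d` commuting with both, then
`(w * a) ^ N = d ^ (N.choose 2) * (w ^ N * a ^ N)`. -/
lemma swap_pow (w a d : Q) (hswap : a * w = d * (w * a))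
    (hdw : Commute d w) (hda : Commute d a) (N : ℕ) :
    (w * a) ^ N = d ^ (N.choose 2) * (w ^ N * a ^ N) := by
  have key : ∀ M : ℕ, a ^ M * w = d ^ M * (w * a ^ M) := by
    intro M
    induction M with
    | zero => simp
    | succ M ih =>
      have h2 : d * a ^ M = a ^ M * d := (hda.pow_right M).eq
      calc a ^ (M+1) * w = a ^ M * (a * w) := by simp only [pow_succ, mul_assoc]
      _ = a ^ M * (d * (w * a)) := by rw [hswap]
      _ = (a ^ M * d) * (w * a) := by simp only [mul_assoc]
      _ = (d * a ^ M) * (w * a) := by rw [h2]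
      _ = d * ((a ^ M * w) * a) := by simp only [mul_assoc]
      _ = d * ((d ^ M * (w * a ^ M)) * a) := by rw [ih]
      _ = d ^ (M+1) * (w * a ^ (M+1)) := by
          rw [pow_succ a, pow_succ' d]; simp only [mul_assoc]
  induction N with
  | zero => simp
  | succ N ih =>
    have hch : (N+1).choose 2 = N.choose 2 + N := by
      rw [Nat.choose_succ_succ]
      simp [Nat.choose_one_right, Nat.add_comm]
    have h3 : w ^ N * d ^ N = d ^ N * w ^ N := (hdw.pow_pow N N).symm.eq
    calc (w*a)^(N+1) = (w*a)^N * (w*a) := pow_succ _ _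
    _ = (d ^ (N.choose 2) * (w ^ N * a ^ N)) * (w * a) := by rw [ih]
    _ = d ^ (N.choose 2) * (w ^ N * ((a ^ N * w) * a)) := by simp only [mul_assoc]
    _ = d ^ (N.choose 2) * (w ^ N * ((d ^ N * (w * a ^ N)) * a)) := by rw [key N]
    _ = d ^ (N.choose 2) * ((w ^ N * d ^ N) * ((w * a ^ N) * a)) := by simp only [mul_assoc]
    _ = d ^ (N.choose 2) * ((d ^ N * w ^ N) * ((w * a ^ N) * a)) := by rw [h3]
    _ = (d ^ (N.choose 2) * d ^ N) * (w ^ N * (w * (a ^ N * a))) := by simp only [mul_assoc]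
    _ = d ^ ((N+1).choose 2) * (w ^ (N+1) * a ^ (N+1)) := by
        rw [hch, pow_add, pow_succ a, pow_succ w]; simp only [mul_assoc]


lemma descent (q : ℕ) (hq : q.Prime) :
    ∀ l : ℕ, ∀ k : ℕ, l ≤ k → ∀ x w : Q, orderOf x = q ^ k → orderOf w = q ^ l →
      w * x * w⁻¹ * x⁻¹ ≠ 1 →
      ∃ x' y' : Q, orderOf x' = 4 ∧ orderOf y' = 4 ∧
        y' * x' * y'⁻¹ * x'⁻¹ = x' ^ (2:ℕ) ∧ y' * x' * y'⁻¹ * x'⁻¹ = y' ^ (2:ℕ) := by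
  intro l
  induction l using Nat.strong_induction_on with
  | _ l IH =>
    intro k hlk x w hx hw hc
    obtain ⟨a, b, ha0, hb0, hca, hcb, hcapow, hcbpow⟩ := pair_rel hQ x w hc
    set c := w * x * w⁻¹ * x⁻¹ with hcdef
    have hq1 : 1 < q := hq.one_lt
    have hqk_cast : ((q:ℤ)^k) = ((q ^ k : ℕ) : ℤ) := by push_cast; ring
    have hql_cast : ((q:ℤ)^l) = ((q ^ l : ℕ) : ℤ) := by push_cast; ring
    -- natural exponents A, B with c = x ^ A = w ^ B
    have hAnn : (0:ℤ) ≤ a % ((q:ℤ) ^ k) := Int.emod_nonneg a (by positivity)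
    set A : ℕ := (a % ((q:ℤ) ^ k)).toNat with hAdef
    have hAcast : (A : ℤ) = a % ((q:ℤ)^k) := Int.toNat_of_nonneg hAnn
    have hcA : c = x ^ A := by
      rw [← zpow_natCast, hAcast, hqk_cast, ← hx, zpow_mod_orderOf]
      exact hca
    have hBnn : (0:ℤ) ≤ b % ((q:ℤ) ^ l) := Int.emod_nonneg b (by positivity)
    set B : ℕ := (b % ((q:ℤ) ^ l)).toNat with hBdef
    have hBcast : (B : ℤ) = b % ((q:ℤ)^l) := Int.toNat_of_nonneg hBnn
    have hcB : c = w ^ B := by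
      rw [← zpow_natCast, hBcast, hql_cast, ← hw, zpow_mod_orderOf]
      exact hcb
    have hA0 : A ≠ 0 := by
      intro h0; rw [h0, pow_zero] at hcA; exact hc hcA
    have hB0 : B ≠ 0 := by
      intro h0; rw [h0, pow_zero] at hcB; exact hc hcB
    -- order of c
    have hcdvdk : orderOf c ∣ q ^ k := by
      apply orderOf_dvd_of_pow_eq_one
      rw [hcA, ← pow_mul, mul_comm, pow_mul, ← hx, pow_orderOf_eq_one, one_pow]
    have hcdvdl : orderOf c ∣ q ^ l := by
      apply orderOf_dvd_of_pow_eq_one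
      rw [hcB, ← pow_mul, mul_comm, pow_mul, ← hw, pow_orderOf_eq_one, one_pow]
    obtain ⟨e, hek, he⟩ := (Nat.dvd_prime_pow hq).mp hcdvdk
    have hel : e ≤ l := by
      rw [he] at hcdvdl; exact (Nat.pow_dvd_pow_iff_le_right hq1).mp hcdvdl
    have he1 : 1 ≤ e := by
      rcases Nat.eq_zero_or_pos e with h0 | h0
      · exfalso; rw [h0, pow_zero] at he; exact hc (orderOf_eq_one_iff.mp he)
      · exact h0
    -- orderOf c divides A and B
    have hocA : orderOf c ∣ A := by
      have h1 : (orderOf c : ℤ) ∣ a := orderOf_dvd_iff_zpow_eq_one.mpr hcapow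
      have h2 : (orderOf c : ℤ) ∣ (q:ℤ)^k := by rw [hqk_cast]; exact_mod_cast hcdvdk
      have h3 : (orderOf c : ℤ) ∣ (A:ℤ) := by
        rw [hAcast, Int.emod_def]
        exact dvd_sub h1 (h2.mul_right _)
      exact_mod_cast h3
    have hocB : orderOf c ∣ B := by
      have h1 : (orderOf c : ℤ) ∣ b := orderOf_dvd_iff_zpow_eq_one.mpr hcbpow
      have h2 : (orderOf c : ℤ) ∣ (q:ℤ)^l := by rw [hql_cast]; exact_mod_cast hcdvdl
      have h3 : (orderOf c : ℤ) ∣ (B:ℤ) := by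
        rw [hBcast, Int.emod_def]
        exact dvd_sub h1 (h2.mul_right _)
      exact_mod_cast h3
    -- gcd identities
    have hocdA : orderOf c = q ^ k / Nat.gcd (q ^ k) A := by
      have := orderOf_pow' x hA0
      rw [← hcA, hx] at this
      exact this
    have hocdB : orderOf c = q ^ l / Nat.gcd (q ^ l) B := by
      have := orderOf_pow' w hB0
      rw [← hcB, hw] at this
      exact this
    have hgcdA : Nat.gcd (q ^ k) A = q ^ (k - e) := by
      have hgpos : 0 < Nat.gcd (q^k) A :=
        Nat.gcd_pos_of_pos_left _ (pow_pos hq.pos k)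
      have hgd : Nat.gcd (q^k) A ∣ q ^ k := Nat.gcd_dvd_left _ _
      have h4 : q ^ k = q ^ e * Nat.gcd (q^k) A :=
        (Nat.div_eq_iff_eq_mul_left hgpos hgd).mp (by rw [← hocdA, he]) |>.trans (by ring)
      have h5 : q ^ k = q ^ e * q ^ (k - e) := by rw [← pow_add]; congr 1; omega
      exact Nat.eq_of_mul_eq_mul_left (pow_pos hq.pos e) (h4.symm.trans h5)
    have hgcdB : Nat.gcd (q ^ l) B = q ^ (l - e) := by
      have hgpos : 0 < Nat.gcd (q^l) B :=
        Nat.gcd_pos_of_pos_left _ (pow_pos hq.pos l)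
      have hgd : Nat.gcd (q^l) B ∣ q ^ l := Nat.gcd_dvd_left _ _
      have h4 : q ^ l = q ^ e * Nat.gcd (q^l) B :=
        (Nat.div_eq_iff_eq_mul_left hgpos hgd).mp (by rw [← hocdB, he]) |>.trans (by ring)
      have h5 : q ^ l = q ^ e * q ^ (l - e) := by rw [← pow_add]; congr 1; omega
      exact Nat.eq_of_mul_eq_mul_left (pow_pos hq.pos e) (h4.symm.trans h5)
    set A' : ℕ := A / q ^ (k - e) with hA'def
    have hA'eq : A = q ^ (k - e) * A' := by
      rw [hA'def]
      exact (Nat.mul_div_cancel' (hgcdA ▸ Nat.gcd_dvd_right (q^k) A)).symm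
    set U : ℕ := B / q ^ (l - e) with hUdef
    have hBeq : B = q ^ (l - e) * U := by
      rw [hUdef]
      exact (Nat.mul_div_cancel' (hgcdB ▸ Nat.gcd_dvd_right (q^l) B)).symm
    have hke2 : e ≤ k - e := by
      have h6 : q ^ e ∣ Nat.gcd (q^k) A := Nat.dvd_gcd (pow_dvd_pow q hek) (he ▸ hocA)
      rw [hgcdA] at h6
      exact (Nat.pow_dvd_pow_iff_le_right hq1).mp h6
    have hle2 : e ≤ l - e := by
      have h6 : q ^ e ∣ Nat.gcd (q^l) B := Nat.dvd_gcd (pow_dvd_pow q hel) (he ▸ hocB)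
      rw [hgcdB] at h6
      exact (Nat.pow_dvd_pow_iff_le_right hq1).mp h6
    have hqU : ¬ q ∣ U := by
      intro hdvd
      obtain ⟨U', hU'⟩ := hdvd
      have h7 : q ^ (l - e + 1) ∣ B := ⟨U', by rw [hBeq, hU', pow_succ]; ring⟩
      have h8 : q ^ (l - e + 1) ∣ Nat.gcd (q^l) B :=
        Nat.dvd_gcd (pow_dvd_pow q (by omega)) h7
      rw [hgcdB] at h8
      have := (Nat.pow_dvd_pow_iff_le_right hq1).mp h8
      omega
    by_cases hstall : q = 2 ∧ k < e + 2
    · -- terminal case : the Q8 configuration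
      obtain ⟨hq2, hke⟩ := hstall
      have he_eq : e = 1 := by omega
      have hk_eq : k = 2 := by omega
      have hl_eq : l = 2 := by omega
      have hAlt : A < q ^ k := by
        have h9 : a % ((q:ℤ)^k) < (q:ℤ)^k := Int.emod_lt_of_pos a (by positivity)
        rw [← hAcast, hqk_cast] at h9
        exact_mod_cast h9
      have hBlt : B < q ^ l := by
        have h9 : b % ((q:ℤ)^l) < (q:ℤ)^l := Int.emod_lt_of_pos b (by positivity)
        rw [← hBcast, hql_cast] at h9
        exact_mod_cast h9
      have hA2 : A = 2 := by
        have h1 : A = 2 * A' := by rw [hA'eq, hq2, hk_eq, he_eq]; norm_num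
        have h2 : A < 4 := by rw [hq2, hk_eq] at hAlt; norm_num at hAlt; exact hAlt
        omega
      have hB2 : B = 2 := by
        have h1 : B = 2 * U := by rw [hBeq, hq2, hl_eq, he_eq]; norm_num
        have h2 : B < 4 := by rw [hq2, hl_eq] at hBlt; norm_num at hBlt; exact hBlt
        omega
      refine ⟨x, w, ?_, ?_, ?_, ?_⟩
      · rw [hx, hk_eq, hq2]; norm_num
      · rw [hw, hl_eq, hq2]; norm_num
      · show c = x ^ (2:ℕ)
        rw [hcA, hA2]
      · show c = w ^ (2:ℕ)
        rw [hcB, hB2]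
    · -- reduction case
      push_neg at hstall
      have hcopU : IsCoprime ((U:ℤ)) ((q:ℤ)) := by
        rw [Int.isCoprime_iff_gcd_eq_one]
        have hco : Nat.Coprime q U := (Nat.Prime.coprime_iff_not_dvd hq).mpr hqU
        simpa [Int.gcd_natCast_natCast] using hco.symm
      obtain ⟨α, β, hbez⟩ := hcopU
      set j : ℤ := -((q:ℤ)^(k-l) * α * (A' : ℤ)) with hj
      have hwxw : w * x * w⁻¹ = c * x := by rw [hcdef]; group
      have hcx : Commute c x := by rw [hcA]; exact (Commute.refl x).pow_left A
      have hcw : Commute c w := by rw [hcB]; exact (Commute.refl w).pow_left B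
      have hconjj : w * x ^ j * w⁻¹ = c ^ j * x ^ j := by
        rw [← conj_zpow, hwxw, hcx.mul_zpow]
      have hswap : (x ^ j) * w = (c ^ (-j)) * (w * x ^ j) := by
        have h6 : w * x ^ j = c ^ j * x ^ j * w := by
          rw [← hconjj]; group
        rw [h6, ← mul_assoc, ← mul_assoc, ← zpow_add, neg_add_cancel, zpow_zero, one_mul]
      have hdw : Commute (c ^ (-j)) w := hcw.zpow_left _
      have hda : Commute (c ^ (-j)) (x ^ j) := hcx.zpow_zpow (-j) j
      set N : ℕ := q ^ (l - 1) with hN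
      have hNz : ((N : ℕ) : ℤ) = (q:ℤ)^(l-1) := by rw [hN]; push_cast; ring
      have hform := swap_pow w (x ^ j) (c ^ (-j)) hswap hdw hda N
      have hwql : w ^ ((q:ℤ)^l) = 1 := by
        rw [hql_cast, zpow_natCast, ← hw, pow_orderOf_eq_one]
      have hwN : w ^ N = c ^ ((q:ℤ)^(e-1) * α) := by
        have hcBz : c = w ^ ((B:ℤ)) := by rw [hcB, zpow_natCast]
        have hBz : (B:ℤ) = (q:ℤ)^(l-e) * (U:ℤ) := by rw [hBeq]; push_cast; ring
        have h10 : (q:ℤ)^(l-e) * (q:ℤ)^(e-1) = (q:ℤ)^(l-1) := by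
          rw [← pow_add]; congr 1; omega
        have h10b : (q:ℤ)^(l-1) * q = (q:ℤ)^l := by
          rw [← pow_succ]; congr 1; omega
        have hexp : (B:ℤ) * ((q:ℤ)^(e-1) * α) = (q:ℤ)^(l-1) + (-β) * ((q:ℤ)^l) := by
          rw [hBz]
          calc (q:ℤ)^(l-e) * U * ((q:ℤ)^(e-1) * α)
              = ((q:ℤ)^(l-e) * (q:ℤ)^(e-1)) * (α * U) := by ring
          _ = (q:ℤ)^(l-1) * (α * U) := by rw [h10]
          _ = (q:ℤ)^(l-1) * (1 - β * q) := by
              rw [show α * (U:ℤ) = 1 - β * q by linarith [hbez]]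
          _ = (q:ℤ)^(l-1) + (-β) * ((q:ℤ)^(l-1) * q) := by ring
          _ = (q:ℤ)^(l-1) + (-β) * ((q:ℤ)^l) := by rw [h10b]
        have h11 : w ^ ((-β) * ((q:ℤ)^l)) = 1 := by
          rw [mul_comm, zpow_mul, hwql, one_zpow]
        rw [hcBz, ← zpow_mul, hexp, zpow_add, h11, mul_one, ← hNz, zpow_natCast]
      have hxjN2 : (x ^ j) ^ N = (c ^ ((q:ℤ)^(e-1) * α))⁻¹ := by
        have hxjN : (x ^ j) ^ N = x ^ (j * ((q:ℤ)^(l-1))) := by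
          rw [← zpow_natCast (x ^ j) N, ← zpow_mul, hNz]
        have hcAz : c = x ^ ((A:ℤ)) := by rw [hcA, zpow_natCast]
        have hAz : (A:ℤ) = (q:ℤ)^(k-e) * (A':ℤ) := by rw [hA'eq]; push_cast; ring
        have h12 : (q:ℤ)^(k-l) * (q:ℤ)^(l-1) = (q:ℤ)^(k-1) := by
          rw [← pow_add]; congr 1; omega
        have h13 : (q:ℤ)^(k-e) * (q:ℤ)^(e-1) = (q:ℤ)^(k-1) := by
          rw [← pow_add]; congr 1; omega
        have hexp2 : j * ((q:ℤ)^(l-1)) = -((A:ℤ) * ((q:ℤ)^(e-1) * α)) := by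
          rw [hj, hAz]
          calc -((q:ℤ)^(k-l) * α * A') * (q:ℤ)^(l-1)
              = -(((q:ℤ)^(k-l) * (q:ℤ)^(l-1)) * (α * A')) := by ring
          _ = -((q:ℤ)^(k-1) * (α * A')) := by rw [h12]
          _ = -(((q:ℤ)^(k-e) * (q:ℤ)^(e-1)) * (α * A')) := by rw [h13]
          _ = -((q:ℤ)^(k-e) * A' * ((q:ℤ)^(e-1) * α)) := by ring
        rw [hxjN, hexp2, zpow_neg, hcAz, ← zpow_mul]
      -- the binomial coefficient term vanishes
      have hCdvd : (orderOf c : ℤ) ∣ (-j) * ((N.choose 2 : ℕ) : ℤ) := by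
        by_cases hq2 : q = 2
        · have hk2 : e + 2 ≤ k := hstall hq2
          set W : ℕ := q ^ (l-1) - 1 with hW
          have hNch : N.choose 2 = q ^ (l - 2) * W := by
            rw [Nat.choose_two_right, hN, hW]
            have h2l : (q:ℕ)^(l-1) = 2 * q^(l-2) := by
              conv_lhs => rw [show l - 1 = (l-2)+1 by omega]
              rw [pow_succ', hq2]
            rw [h2l]
            have hrr : 2 * q^(l-2) * (2 * q ^ (l-2) - 1) = 2 * (q^(l-2) * (2 * q^(l-2) - 1)) := by
              ring
            rw [hrr, Nat.mul_div_cancel_left _ (by norm_num)]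
          have h14 : ((q:ℤ))^(k-l) * ((q:ℤ))^(l-2) = (q:ℤ)^e * (q:ℤ)^(k-2-e) := by
            rw [← pow_add, ← pow_add]; congr 1; omega
          rw [he]
          refine ⟨(q:ℤ)^(k-2-e) * α * A' * W, ?_⟩
          rw [hj, hNch]
          push_cast
          calc -(-((q:ℤ)^(k-l) * α * A')) * ((q:ℤ)^(l-2) * W)
              = ((q:ℤ)^(k-l) * ((q:ℤ))^(l-2)) * (α * A' * W) := by ring
          _ = ((q:ℤ)^e * (q:ℤ)^(k-2-e)) * (α * A' * W) := by rw [h14]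
          _ = (q:ℤ)^e * ((q:ℤ)^(k-2-e) * α * A' * W) := by ring
        · have hodd : Odd ((q:ℕ)^(l-1)) := (hq.odd_of_ne_two hq2).pow
          obtain ⟨D, hD⟩ := hodd
          have hNch : N.choose 2 = q ^ (l - 1) * D := by
            rw [Nat.choose_two_right, hN, hD]
            have h15 : 2 * D + 1 - 1 = 2 * D := by omega
            rw [h15]
            have : (2 * D + 1) * (2 * D) = 2 * ((2 * D + 1) * D) := by ring
            rw [this, Nat.mul_div_cancel_left _ (by norm_num)]
          have h14 : ((q:ℤ))^(k-l) * ((q:ℤ))^(l-1) = (q:ℤ)^e * (q:ℤ)^(k-1-e) := by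
            rw [← pow_add, ← pow_add]; congr 1; omega
          rw [he]
          refine ⟨(q:ℤ)^(k-1-e) * α * A' * D, ?_⟩
          rw [hj, hNch]
          push_cast
          calc -(-((q:ℤ)^(k-l) * α * A')) * ((q:ℤ)^(l-1) * D)
              = ((q:ℤ)^(k-l) * (q:ℤ)^(l-1)) * (α * A' * D) := by ring
          _ = ((q:ℤ)^e * (q:ℤ)^(k-1-e)) * (α * A' * D) := by rw [h14]
          _ = (q:ℤ)^e * ((q:ℤ)^(k-1-e) * α * A' * D) := by ring
      have hjC : c ^ ((-j) * ((N.choose 2 : ℕ) : ℤ)) = 1 :=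
        orderOf_dvd_iff_zpow_eq_one.mp hCdvd
      set w' := w * x ^ j with hw'def
      have hw'N : w' ^ N = 1 := by
        rw [hw'def, hform, hxjN2, hwN, mul_inv_cancel, mul_one,
          ← zpow_natCast (c ^ (-j)), ← zpow_mul]
        exact hjC
      have hworder : orderOf w' ∣ q ^ (l-1) := orderOf_dvd_of_pow_eq_one hw'N
      obtain ⟨l₂, hl₂le, hl₂⟩ := (Nat.dvd_prime_pow hq).mp hworder
      have hl₂lt : l₂ < l := by omega
      have hcomm' : w' * x * w'⁻¹ * x⁻¹ ≠ 1 := by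
        have heq : w' * x * w'⁻¹ * x⁻¹ = c := by rw [hw'def, hcdef]; group
        rw [heq]; exact hc
      exact IH l₂ hl₂lt k (by omega) x w' hx hl₂ hcomm'

/-- Every nonabelian Dedekind group contains a Q8-like configuration. -/
lemma dedekind_config (u v : Q) (hc : v * u * v⁻¹ * u⁻¹ ≠ 1) :
    ∃ x y : Q, orderOf x = 4 ∧ orderOf y = 4 ∧
      y * x * y⁻¹ * x⁻¹ = x ^ (2:ℕ) ∧ y * x * y⁻¹ * x⁻¹ = y ^ (2:ℕ) := by
  obtain ⟨a, b, ha0, hb0, hca, hcb, hcapow, hcbpow⟩ := pair_rel hQ u v hc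
  set c := v * u * v⁻¹ * u⁻¹ with hcdef
  have hufin : IsOfFinOrder u := by
    apply isOfFinOrder_of_zpow (mul_ne_zero ha0 ha0)
    rw [zpow_mul, ← hca]; exact hcapow
  have hvfin : IsOfFinOrder v := by
    apply isOfFinOrder_of_zpow (mul_ne_zero hb0 hb0)
    rw [zpow_mul, ← hcb]; exact hcbpow
  set n := orderOf u with hn
  set m := orderOf v with hm
  have hn0 : n ≠ 0 := by simpa [hn, orderOf_eq_zero_iff, not_not] using hufin
  have hm0 : m ≠ 0 := by simpa [hm, orderOf_eq_zero_iff, not_not] using hvfin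
  set L := Nat.lcm n m with hL
  have hLu : u ^ L = 1 := by
    obtain ⟨t, ht⟩ := Nat.dvd_lcm_left n m
    rw [hL, ht, pow_mul, hn, pow_orderOf_eq_one, one_pow]
  have hLv : v ^ L = 1 := by
    obtain ⟨t, ht⟩ := Nat.dvd_lcm_right n m
    rw [hL, ht, pow_mul, hm, pow_orderOf_eq_one, one_pow]
  have hL0 : L ≠ 0 := Nat.lcm_ne_zero hn0 hm0
  have hcn : c ^ n = 1 := by
    rw [hca, ← zpow_natCast (u ^ a) n, ← zpow_mul, mul_comm, zpow_mul, zpow_natCast, hn,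
      pow_orderOf_eq_one, one_zpow]
  have hocn : orderOf c ∣ n := orderOf_dvd_of_pow_eq_one hcn
  have hoc1 : orderOf c ≠ 1 := fun h1 => hc (orderOf_eq_one_iff.mp h1)
  set q := (orderOf c).minFac with hqdef
  have hq : q.Prime := Nat.minFac_prime hoc1
  set alpha := L.factorization q with halpha
  set M := L / q ^ alpha with hM
  have hcop : Nat.Coprime q M := Nat.coprime_ordCompl hq hL0
  have hqM : q ^ alpha * M = L := Nat.ordProj_mul_ordCompl_eq_self L q
  have hqL : q ∣ L := dvd_trans (Nat.minFac_dvd _) (dvd_trans hocn (Nat.dvd_lcm_left n m))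
  have halpha1 : 1 ≤ alpha := hq.factorization_pos_of_dvd hL0 hqL
  have hcopMq : IsCoprime ((M:ℤ)) ((q:ℤ)^alpha) := by
    rw [Int.isCoprime_iff_gcd_eq_one]
    have h2 : Nat.Coprime M (q ^ alpha) := (hcop.symm).pow_right alpha
    have h3 : ((q:ℤ))^alpha = ((q^alpha : ℕ) : ℤ) := by push_cast; ring
    rw [h3, Int.gcd_natCast_natCast]
    exact h2
  obtain ⟨β, γ, hbez⟩ := hcopMq
  set K : ℤ := β * M with hK
  set x := u ^ K with hxdef
  set y := v ^ K with hydef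
  have hxord : x ^ (q ^ alpha : ℕ) = 1 := by
    rw [hxdef, ← zpow_natCast (u ^ K), ← zpow_mul]
    have h3 : K * ((q^alpha : ℕ) : ℤ) = (L:ℤ) * β := by
      rw [hK, ← hqM]; push_cast; ring
    rw [h3, zpow_mul, zpow_natCast, hLu, one_zpow]
  have hyord : y ^ (q ^ alpha : ℕ) = 1 := by
    rw [hydef, ← zpow_natCast (v ^ K), ← zpow_mul]
    have h3 : K * ((q^alpha : ℕ) : ℤ) = (L:ℤ) * β := by
      rw [hK, ← hqM]; push_cast; ring
    rw [h3, zpow_mul, zpow_natCast, hLv, one_zpow]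
  -- conjugation identities
  have hvuv : v * u * v⁻¹ = c * u := by rw [hcdef]; group
  have hcu : Commute c u := by rw [hca]; exact (Commute.refl u).zpow_left a
  have hcv : Commute c v := by rw [hcb]; exact (Commute.refl v).zpow_left b
  have hstep : ∀ t : ℤ, v * u ^ t * v⁻¹ = c ^ t * u ^ t := by
    intro t; rw [← conj_zpow, hvuv, hcu.mul_zpow]
  have hstep' : ∀ t : ℤ, v⁻¹ * u ^ t * v = c ^ (-t) * u ^ t := by
    intro t
    have h8 : (v⁻¹ * u * v⁻¹⁻¹) ^ t = v⁻¹ * u ^ t * v⁻¹⁻¹ := conj_zpow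
    rw [inv_inv] at h8
    have h6 : v⁻¹ * c * v = c := by
      rw [← hcv.inv_right.eq, mul_assoc, inv_mul_cancel, mul_one]
    have h7 : u = c * (v⁻¹ * u * v) := by
      conv_lhs => rw [show u = v⁻¹ * (v * u * v⁻¹) * v by group]
      rw [hvuv, show v⁻¹ * (c * u) * v = (v⁻¹ * c * v) * (v⁻¹ * u * v) by group, h6]
    have hvuv' : v⁻¹ * u * v = c⁻¹ * u := by
      conv_rhs => rw [h7]
      rw [← mul_assoc, inv_mul_cancel, one_mul]
    rw [← h8, hvuv', (hcu.inv_left).mul_zpow]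
    congr 1
    rw [inv_zpow, ← zpow_neg]
  have hconjc : ∀ E : ℤ, v * c ^ E * v⁻¹ = c ^ E := by
    intro E
    rw [(hcv.zpow_left E).symm.eq, mul_assoc, mul_inv_cancel, mul_one]
  have hconjc2 : ∀ E F : ℤ, v ^ F * c ^ E * (v ^ F)⁻¹ = c ^ E := by
    intro E F
    rw [(hcv.zpow_zpow E F).symm.eq, mul_assoc, mul_inv_cancel, mul_one]
  have hconj : ∀ i : ℤ, v ^ i * u ^ K * (v ^ i)⁻¹ = c ^ (i * K) * u ^ K := by
    intro i
    induction i using Int.induction_on with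
    | zero => simp
    | succ i ih =>
        have hv1 : v ^ ((i:ℤ)+1) = v * v ^ (i:ℤ) := by
          rw [show (i:ℤ)+1 = 1+(i:ℤ) by ring, zpow_add, zpow_one]
        calc v ^ ((i:ℤ)+1) * u ^ K * (v ^ ((i:ℤ)+1))⁻¹
            = v * (v ^ (i:ℤ) * u ^ K * (v ^ (i:ℤ))⁻¹) * v⁻¹ := by rw [hv1]; group
        _ = v * (c ^ ((i:ℤ) * K) * u ^ K) * v⁻¹ := by rw [ih]
        _ = (v * c ^ ((i:ℤ)*K) * v⁻¹) * (v * u ^ K * v⁻¹) := by group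
        _ = c ^ ((i:ℤ)*K) * (c ^ K * u ^ K) := by rw [hconjc, hstep]
        _ = c ^ (((i:ℤ)+1) * K) * u ^ K := by
            rw [← mul_assoc, ← zpow_add, show (i:ℤ)*K + K = ((i:ℤ)+1)*K by ring]
    | pred i ih =>
        have hv1 : v ^ (-(i:ℤ)-1) = v ^ (-(i:ℤ)) * v⁻¹ := by rw [zpow_sub_one]
        calc v ^ (-(i:ℤ)-1) * u ^ K * (v ^ (-(i:ℤ)-1))⁻¹
            = v ^ (-(i:ℤ)) * (v⁻¹ * u ^ K * v) * (v ^ (-(i:ℤ)))⁻¹ := by rw [hv1]; group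
        _ = v ^ (-(i:ℤ)) * (c ^ (-K) * u ^ K) * (v ^ (-(i:ℤ)))⁻¹ := by rw [hstep' K]
        _ = (v ^ (-(i:ℤ)) * c ^ (-K) * (v ^ (-(i:ℤ)))⁻¹) *
              (v ^ (-(i:ℤ)) * u ^ K * (v ^ (-(i:ℤ)))⁻¹) := by group
        _ = c ^ (-K) * (c ^ (-(i:ℤ) * K) * u ^ K) := by rw [hconjc2, ih]
        _ = c ^ ((-(i:ℤ)-1) * K) * u ^ K := by
            rw [← mul_assoc, ← zpow_add, show -K + -(i:ℤ)*K = (-(i:ℤ)-1)*K by ring]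
  have hcomm2 : y * x * y⁻¹ * x⁻¹ = c ^ (K * K) := by
    rw [hxdef, hydef]
    calc v ^ K * u ^ K * (v ^ K)⁻¹ * (u ^ K)⁻¹
        = (v ^ K * u ^ K * (v ^ K)⁻¹) * (u ^ K)⁻¹ := by group
    _ = (c ^ (K * K) * u ^ K) * (u ^ K)⁻¹ := by rw [hconj K]
    _ = c ^ (K * K) := by rw [mul_assoc, mul_inv_cancel, mul_one]
  have hKq : ¬ (q:ℤ) ∣ K := by
    intro hd
    have h9 : (q:ℤ) ∣ β * M + γ * (q:ℤ)^alpha := by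
      apply dvd_add
      · rw [hK] at hd; exact hd
      · exact Dvd.dvd.mul_left (dvd_pow_self (q:ℤ) (by omega)) γ
    rw [hbez] at h9
    have h10 := Int.le_of_dvd one_pos h9
    have h11 : (1:ℤ) < q := by exact_mod_cast hq.one_lt
    omega
  have hcKK : c ^ (K * K) ≠ 1 := by
    intro h1
    have hdv : (orderOf c : ℤ) ∣ K * K := orderOf_dvd_iff_zpow_eq_one.mpr h1
    have hqoc : (q:ℤ) ∣ (orderOf c : ℤ) := Int.natCast_dvd_natCast.mpr (Nat.minFac_dvd _)
    have hqKK : (q:ℤ) ∣ K * K := dvd_trans hqoc hdv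
    have hqprime : Prime ((q:ℕ):ℤ) := by
      rw [Int.prime_iff_natAbs_prime]
      simpa using hq
    rcases hqprime.dvd_mul.mp hqKK with h | h
    · exact hKq h
    · exact hKq h
  obtain ⟨kx, hkxle, hkx⟩ := (Nat.dvd_prime_pow hq).mp (orderOf_dvd_of_pow_eq_one hxord)
  obtain ⟨ky, hkyle, hky⟩ := (Nat.dvd_prime_pow hq).mp (orderOf_dvd_of_pow_eq_one hyord)
  have hcomm3 : y * x * y⁻¹ * x⁻¹ ≠ 1 := by rw [hcomm2]; exact hcKK
  rcases le_total ky kx with hcmp | hcmp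
  · exact descent hQ q hq ky kx hcmp x y hkx hky hcomm3
  · have hswapped : x * y * x⁻¹ * y⁻¹ ≠ 1 := by
      intro h1
      apply hcomm3
      have h12 : y * x * y⁻¹ * x⁻¹ = (x * y * x⁻¹ * y⁻¹)⁻¹ := by group
      rw [h12, h1, inv_one]
    exact descent hQ q hq kx ky hcmp y x hky hkx hswapped

end Ded

section GSide

variable {G : Type*} [Group G]

/-- Elements of `zpowers s` are killed by `orderOf s`. -/
lemma zpowers_pow_order {s v : G} (hv : v ∈ Subgroup.zpowers s) : v ^ (orderOf s) = 1 := by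
  obtain ⟨i, hi⟩ := Subgroup.mem_zpowers_iff.mp hv
  rw [← hi, ← zpow_natCast (s ^ i), ← zpow_mul, mul_comm, zpow_mul, zpow_natCast,
    pow_orderOf_eq_one, one_zpow]

/-- If `g` has prime order and `g ^ i ≠ 1` then `g ∈ zpowers (g ^ i)`. -/
lemma mem_zpowers_zpow {g : G} {i : ℤ} (hp : (orderOf g).Prime) (hne : g ^ i ≠ 1) :
    g ∈ Subgroup.zpowers (g ^ i) := by
  have hpd : ¬ ((orderOf g : ℤ) ∣ i) := by
    intro hd
    exact hne (orderOf_dvd_iff_zpow_eq_one.mp hd)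
  have hcop : IsCoprime i ((orderOf g : ℤ)) := by
    rw [Int.isCoprime_iff_gcd_eq_one]
    have hgd : (Int.gcd i ((orderOf g : ℕ):ℤ)) ∣ orderOf g := by
      have h1 := Int.gcd_dvd_right (a := i) (b := ((orderOf g : ℕ):ℤ))
      exact_mod_cast h1
    rcases hp.eq_one_or_self_of_dvd _ hgd with h1 | h1
    · exact h1
    · exfalso
      apply hpd
      have h2 := Int.gcd_dvd_left (a := i) (b := ((orderOf g : ℕ):ℤ))
      rw [h1] at h2
      exact_mod_cast h2
  obtain ⟨α, β, hab⟩ := hcop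
  have hgp : g ^ ((orderOf g : ℕ):ℤ) = 1 := by
    rw [zpow_natCast, pow_orderOf_eq_one]
  have hgeq : g = (g ^ i) ^ α := by
    calc g = g ^ (α * i + β * ((orderOf g : ℕ):ℤ)) := by rw [hab, zpow_one]
    _ = (g ^ i) ^ α * (g ^ ((orderOf g : ℕ):ℤ)) ^ β := by
        rw [show α * i + β * ((orderOf g:ℕ):ℤ) = i * α + ((orderOf g:ℕ):ℤ) * β by ring,
          zpow_add, zpow_mul, zpow_mul]
    _ = (g ^ i) ^ α := by rw [hgp, one_zpow, mul_one]
  have hfin := Subgroup.zpow_mem (Subgroup.zpowers (g ^ i)) (Subgroup.mem_zpowers (g ^ i)) α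
  rwa [← hgeq] at hfin

variable (hG : IsJND G)
include hG

lemma sup_normal (T N : Subgroup G) (hN : N.Normal) (hNbot : N ≠ ⊥) :
    (T ⊔ N).Normal := by
  haveI := hN
  have hD : IsDedekind (G ⧸ N) := hG.2 N hN hNbot
  have h1 := (hD (Subgroup.map (QuotientGroup.mk' N) T)).comap (QuotientGroup.mk' N)
  rwa [Subgroup.comap_map_eq, QuotientGroup.ker_mk'] at h1

lemma no_normal_le {T : Subgroup G} (hT : ¬ T.Normal) {N : Subgroup G}
    (hN : N.Normal) (hbot : N ≠ ⊥) (hle : N ≤ T) : False := by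
  have h1 := sup_normal hG T N hN hbot
  rw [sup_of_le_left hle] at h1
  exact hT h1

lemma center_inter {T : Subgroup G} (hT : ¬T.Normal) {z : G}
    (hz : z ∈ Subgroup.center G) (hzT : z ∈ T) : z = 1 := by
  by_contra h1
  exact no_normal_le hG hT (central_zpowers_normal hz)
    (fun hb => h1 (Subgroup.zpowers_eq_bot.mp hb)) (Subgroup.zpowers_le.mpr hzT)

omit hG in
lemma mem_sup_decomp {T N : Subgroup G} (hN : N.Normal) {g : G} (hg : g ∈ T ⊔ N) :
    ∃ t ∈ T, ∃ n ∈ N, g = t * n := by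
  have h1 : g ∈ (↑(T ⊔ N) : Set G) := hg
  rw [Subgroup.mul_normal] at h1
  obtain ⟨t, ht, n, hn, htn⟩ := h1
  exact ⟨t, ht, n, hn, htn.symm⟩

lemma center_torsion {H : Subgroup G} (hH : ¬H.Normal) {z : G}
    (hz : z ∈ Subgroup.center G) : IsOfFinOrder z := by
  by_contra hfin
  have hzpow1 : ∀ t : ℤ, z ^ t = 1 → t = 0 := by
    intro t ht
    by_contra h0
    exact hfin (isOfFinOrder_of_zpow h0 ht)
  apply hH
  constructor
  intro h hh g
  have key : ∀ nn : ℕ, ∃ h' ∈ H, ∃ m : ℤ, g * h * g⁻¹ = h' * z ^ (m * ((nn:ℤ)+1)) := by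
    intro nn
    have hzzc : z ^ ((nn:ℤ)+1) ∈ Subgroup.center G :=
      Subgroup.zpow_mem (Subgroup.center G) hz _
    have hzz1 : z ^ ((nn:ℤ)+1) ≠ 1 := by
      intro h1
      have h2 := hzpow1 _ h1
      omega
    have hnorm := sup_normal hG H (Subgroup.zpowers (z ^ ((nn:ℤ)+1)))
      (central_zpowers_normal hzzc) (fun hb => hzz1 (Subgroup.zpowers_eq_bot.mp hb))
    have hmem : g * h * g⁻¹ ∈ H ⊔ Subgroup.zpowers (z ^ ((nn:ℤ)+1)) :=
      hnorm.conj_mem h (Subgroup.mem_sup_left hh) g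
    obtain ⟨t, ht, w, hw, htw⟩ := mem_sup_decomp (central_zpowers_normal hzzc) hmem
    obtain ⟨m, hm⟩ := Subgroup.mem_zpowers_iff.mp hw
    refine ⟨t, ht, m, ?_⟩
    rw [htw, ← hm, ← zpow_mul, mul_comm ((nn:ℤ)+1) m]
  obtain ⟨h0, hh0, m0, hm0⟩ := key 0
  obtain ⟨h1', hh1, m1, hm1⟩ := key (m0.natAbs)
  have heq : h0 * z ^ (m0 * (((0:ℕ):ℤ)+1)) = h1' * z ^ (m1 * (((m0.natAbs:ℕ):ℤ)+1)) := by
    rw [← hm0, ← hm1]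
  have hdec : h1'⁻¹ * h0 =
      z ^ (m1 * (((m0.natAbs:ℕ):ℤ)+1) - m0 * (((0:ℕ):ℤ)+1)) := by
    rw [zpow_sub]
    calc h1'⁻¹ * h0
        = h1'⁻¹ * (h0 * z ^ (m0 * (((0:ℕ):ℤ)+1))) * (z ^ (m0 * (((0:ℕ):ℤ)+1)))⁻¹ := by group
    _ = h1'⁻¹ * (h1' * z ^ (m1 * (((m0.natAbs:ℕ):ℤ)+1))) * (z ^ (m0 * (((0:ℕ):ℤ)+1)))⁻¹ := by
        rw [heq]
    _ = z ^ (m1 * (((m0.natAbs:ℕ):ℤ)+1)) * (z ^ (m0 * (((0:ℕ):ℤ)+1)))⁻¹ := by group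
  have hcentral : z ^ (m1 * (((m0.natAbs:ℕ):ℤ)+1) - m0 * (((0:ℕ):ℤ)+1)) ∈ Subgroup.center G :=
    Subgroup.zpow_mem _ hz _
  have hmemH : z ^ (m1 * (((m0.natAbs:ℕ):ℤ)+1) - m0 * (((0:ℕ):ℤ)+1)) ∈ H := by
    rw [← hdec]; exact H.mul_mem (H.inv_mem hh1) hh0
  have hz0 := center_inter hG hH hcentral hmemH
  have hexp := hzpow1 _ hz0
  have hm00 : m0 = 0 := by
    have hdvd : ((m0.natAbs : ℤ) + 1) ∣ m0 := by
      refine ⟨m1, ?_⟩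
      have : m1 * (((m0.natAbs:ℕ):ℤ)+1) = m0 * (((0:ℕ):ℤ)+1) := by omega
      push_cast at this ⊢
      linarith [this]
    rcases eq_or_ne m0 0 with h | h
    · exact h
    · exfalso
      have h2 : ((m0.natAbs : ℤ) + 1) ∣ |m0| := (dvd_abs _ _).mpr hdvd
      have h3 := Int.le_of_dvd (abs_pos.mpr h) h2
      rw [Int.abs_eq_natAbs] at h3
      omega
  rw [hm0, hm00]
  simpa using hh0

lemma exists_s (hZ : Subgroup.center G ≠ ⊥) {H : Subgroup G} (hH : ¬H.Normal) :
    ∃ s : G, s ∈ Subgroup.center G ∧ (orderOf s).Prime ∧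
      ∀ t : G, t ∈ Subgroup.center G → t ≠ 1 → s ∈ Subgroup.zpowers t := by
  obtain ⟨z, hzc, hz1⟩ : ∃ z ∈ Subgroup.center G, z ≠ (1:G) := by
    by_contra hno
    push_neg at hno
    apply hZ
    ext g
    simp only [Subgroup.mem_bot]
    exact ⟨fun hg => hno g hg, fun hg => by rw [hg]; exact Subgroup.one_mem _⟩
  have hzfin : IsOfFinOrder z := center_torsion hG hH hzc
  have hn0 : orderOf z ≠ 0 := by
    simpa [orderOf_eq_zero_iff, not_not] using hzfin
  have hn1 : orderOf z ≠ 1 := fun h1 => hz1 (orderOf_eq_one_iff.mp h1)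
  have hp : (orderOf z).minFac.Prime := Nat.minFac_prime hn1
  set p := (orderOf z).minFac with hpdef
  set s := z ^ (orderOf z / p) with hs
  have hnp0 : orderOf z / p ≠ 0 := by
    have h1 : p ≤ orderOf z := Nat.minFac_le (Nat.pos_of_ne_zero hn0)
    have h2 := Nat.div_pos h1 hp.pos
    omega
  have hsord : orderOf s = p := by
    rw [hs, orderOf_pow' z hnp0,
      Nat.gcd_eq_right (Nat.div_dvd_of_dvd (Nat.minFac_dvd (orderOf z))),
      Nat.div_div_self (Nat.minFac_dvd (orderOf z)) hn0]
  have hsc : s ∈ Subgroup.center G := by rw [hs]; exact Subgroup.pow_mem _ hzc _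
  have hs1 : s ≠ 1 := by
    intro h1
    rw [h1, orderOf_one] at hsord
    exact hp.ne_one hsord.symm
  refine ⟨s, hsc, by rw [hsord]; exact hp, ?_⟩
  intro t htc ht1
  have hint : ∃ i : ℤ, s ^ i ≠ 1 ∧ s ^ i ∈ Subgroup.zpowers t := by
    by_contra hno
    push_neg at hno
    apply hH
    constructor
    intro h hh g
    have hnorm1 := sup_normal hG H (Subgroup.zpowers s) (central_zpowers_normal hsc)
      (fun hb => hs1 (Subgroup.zpowers_eq_bot.mp hb))
    have hnorm2 := sup_normal hG H (Subgroup.zpowers t) (central_zpowers_normal htc)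
      (fun hb => ht1 (Subgroup.zpowers_eq_bot.mp hb))
    have hmem1 : g * h * g⁻¹ ∈ H ⊔ Subgroup.zpowers s :=
      hnorm1.conj_mem h (Subgroup.mem_sup_left hh) g
    have hmem2 : g * h * g⁻¹ ∈ H ⊔ Subgroup.zpowers t :=
      hnorm2.conj_mem h (Subgroup.mem_sup_left hh) g
    obtain ⟨h1', hh1, w1, hw1, he1⟩ := mem_sup_decomp (central_zpowers_normal hsc) hmem1
    obtain ⟨h2', hh2, w2, hw2, he2⟩ := mem_sup_decomp (central_zpowers_normal htc) hmem2
    have hw1c : w1 ∈ Subgroup.center G := Subgroup.zpowers_le.mpr hsc hw1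
    have hw2c : w2 ∈ Subgroup.center G := Subgroup.zpowers_le.mpr htc hw2
    have heq : h1' * w1 = h2' * w2 := he1.symm.trans he2
    have hd : h2'⁻¹ * h1' = w2 * w1⁻¹ := by
      calc h2'⁻¹ * h1' = h2'⁻¹ * (h1' * w1) * w1⁻¹ := by group
      _ = h2'⁻¹ * (h2' * w2) * w1⁻¹ := by rw [heq]
      _ = w2 * w1⁻¹ := by group
    have hcen : w2 * w1⁻¹ ∈ Subgroup.center G := mul_mem hw2c (inv_mem hw1c)
    have hinH : w2 * w1⁻¹ ∈ H := by rw [← hd]; exact mul_mem (inv_mem hh2) hh1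
    have h1eq : w2 * w1⁻¹ = 1 := center_inter hG hH hcen hinH
    have hww : w2 = w1 := mul_inv_eq_one.mp h1eq
    obtain ⟨i, hi⟩ := Subgroup.mem_zpowers_iff.mp hw1
    have hw1t : w1 ∈ Subgroup.zpowers t := hww ▸ hw2
    have hw1one : w1 = 1 := by
      by_contra hne
      exact hno i (by rw [hi]; exact hne) (by rw [hi]; exact hw1t)
    rw [he1, hw1one, mul_one]
    exact hh1
  obtain ⟨i, hi1, hit⟩ := hint
  have hsmem : s ∈ Subgroup.zpowers (s ^ i) :=
    mem_zpowers_zpow (by rw [hsord]; exact hp) hi1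
  exact (Subgroup.zpowers_le.mpr hit) hsmem

lemma nonnormal_exponent {s : G} (hsc : s ∈ Subgroup.center G) (hs1 : s ≠ 1)
    {T : Subgroup G} (hT : ¬T.Normal) : ∀ τ ∈ T, τ ^ (orderOf s) = 1 := by
  intro τ hτ
  have hcore : T.normalCore = ⊥ := by
    by_contra hb
    exact no_normal_le hG hT (Subgroup.normalCore_normal T) hb (Subgroup.normalCore_le T)
  have hmem : ∀ g : G, g * τ ^ (orderOf s) * g⁻¹ ∈ T := by
    intro g
    have hnorm := sup_normal hG T (Subgroup.zpowers s) (central_zpowers_normal hsc)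
      (fun hb => hs1 (Subgroup.zpowers_eq_bot.mp hb))
    have hmem1 : g * τ * g⁻¹ ∈ T ⊔ Subgroup.zpowers s :=
      hnorm.conj_mem τ (Subgroup.mem_sup_left hτ) g
    obtain ⟨t, ht, w, hw, he⟩ := mem_sup_decomp (central_zpowers_normal hsc) hmem1
    have hwc : w ∈ Subgroup.center G := Subgroup.zpowers_le.mpr hsc hw
    have hcomm : Commute t w := (Subgroup.mem_center_iff.mp hwc t)
    have hwp : w ^ (orderOf s) = 1 := zpowers_pow_order hw
    have hconj : g * τ ^ (orderOf s) * g⁻¹ = (g * τ * g⁻¹) ^ (orderOf s) := by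
      rw [conj_pow]
    rw [hconj, he, hcomm.mul_pow, hwp, mul_one]
    exact T.pow_mem ht _
  have hmem2 : τ ^ (orderOf s) ∈ T.normalCore := hmem
  rw [hcore] at hmem2
  exact Subgroup.mem_bot.mp hmem2

lemma exists_nonnormal_small {s : G} (hsc : s ∈ Subgroup.center G)
    (hsp : (orderOf s).Prime) {H : Subgroup G} (hH : ¬H.Normal) :
    ∃ h : G, ¬(Subgroup.zpowers h).Normal ∧ orderOf h = orderOf s := by
  have hs1 : s ≠ 1 := by
    intro h1
    rw [h1, orderOf_one] at hsp
    exact hsp.ne_one rfl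
  have hex : ∃ h : G, h ∈ H ∧ ¬ (Subgroup.zpowers h).Normal := by
    by_contra hno
    push_neg at hno
    apply hH
    constructor
    intro h hh g
    have h1 := (hno h hh).conj_mem h (Subgroup.mem_zpowers h) g
    exact Subgroup.zpowers_le.mpr hh h1
  obtain ⟨h, hhH, hnn⟩ := hex
  have hp1 : h ^ (orderOf s) = 1 :=
    nonnormal_exponent hG hsc hs1 hnn h (Subgroup.mem_zpowers h)
  have hne : h ≠ 1 := by
    intro h1
    apply hnn
    rw [h1, Subgroup.zpowers_one_eq_bot]
    infer_instance
  have hd : orderOf h ∣ orderOf s := orderOf_dvd_of_pow_eq_one hp1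
  rcases hsp.eq_one_or_self_of_dvd _ hd with h1 | h1
  · exact absurd (orderOf_eq_one_iff.mp h1) hne
  · exact ⟨h, hnn, h1⟩

end GSide





section Endgame

variable {G : Type*} [Group G]
variable (hG : IsJND G)
include hG

/-- In the `p = 2` case, a lift of an element of order 4 in `G ⧸ ⟨s⟩` has order 8,
its fourth power is `s`, and it generates a normal subgroup. -/
lemma lift_struct {H : Subgroup G} (hH : ¬H.Normal)
    {s : G} (hsc : s ∈ Subgroup.center G) (hp2 : orderOf s = 2)
    (hsmin : ∀ t : G, t ∈ Subgroup.center G → t ≠ 1 → s ∈ Subgroup.zpowers t)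
    (g : G) (h4S : g ^ (4:ℕ) ∈ Subgroup.zpowers s) (h2S : g ^ (2:ℕ) ∉ Subgroup.zpowers s) :
    (Subgroup.zpowers g).Normal ∧ orderOf g = 8 ∧ g ^ (4:ℕ) = s := by
  have hs1 : s ≠ 1 := by
    intro h1; rw [h1, orderOf_one] at hp2; norm_num at hp2
  have hg8 : g ^ (8:ℕ) = 1 := by
    have h1 : (g ^ (4:ℕ)) ^ (orderOf s) = 1 := zpowers_pow_order h4S
    rw [hp2] at h1
    rw [show (8:ℕ) = 4 * 2 by norm_num, pow_mul]
    exact h1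
  have hdvd8 : orderOf g ∣ 8 := orderOf_dvd_of_pow_eq_one hg8
  have hg2ne : g ^ (2:ℕ) ≠ 1 := by
    intro h1; exact h2S (h1 ▸ Subgroup.one_mem _)
  have hnorm : (Subgroup.zpowers g).Normal := by
    by_contra hnn
    have h1 := nonnormal_exponent hG hsc hs1 hnn g (Subgroup.mem_zpowers g)
    rw [hp2] at h1
    exact hg2ne h1
  have hdvd8' : orderOf g ∣ 2 ^ 3 := by
    rw [show (2:ℕ)^3 = 8 by norm_num]
    exact hdvd8
  obtain ⟨i, hile, hi⟩ := (Nat.dvd_prime_pow Nat.prime_two).mp hdvd8'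
  have hine : 2 ≤ i := by
    by_contra hlt
    push_neg at hlt
    interval_cases i
    · rw [pow_zero] at hi
      exact hg2ne (by rw [orderOf_eq_one_iff.mp hi, one_pow])
    · rw [pow_one] at hi
      exact hg2ne (by rw [← hi]; exact pow_orderOf_eq_one g)
  have hd48 : orderOf g = 4 ∨ orderOf g = 8 := by
    interval_cases i
    · left; rw [hi]; norm_num
    · right; rw [hi]; norm_num
  set d := orderOf g with hd
  have h2d : 2 * (d/2) = d := by rcases hd48 with h | h <;> omega
  have hd4 : 4 ≤ d := by rcases hd48 with h | h <;> omega
  set dd := g ^ (d / 2) with hdd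
  have hdd2 : dd ^ (2:ℕ) = 1 := by
    rw [hdd, ← pow_mul, show d/2*2 = d by omega, hd, pow_orderOf_eq_one]
  have hdd1 : dd ≠ 1 := by
    intro h1
    have h2 : orderOf g ∣ d/2 := orderOf_dvd_of_pow_eq_one (by rw [← hdd]; exact h1)
    rw [← hd] at h2
    have h3 := Nat.le_of_dvd (by omega) h2
    omega
  have hddcen : dd ∈ Subgroup.center G := by
    rw [Subgroup.mem_center_iff]
    intro g'
    have hddmem : dd ∈ Subgroup.zpowers g := by
      rw [hdd]; exact Subgroup.pow_mem _ (Subgroup.mem_zpowers g) _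
    have hconj : g' * dd * g'⁻¹ ∈ Subgroup.zpowers g := hnorm.conj_mem dd hddmem g'
    obtain ⟨μ, hμ⟩ := Subgroup.mem_zpowers_iff.mp hconj
    have hsq : (g' * dd * g'⁻¹) ^ (2:ℕ) = 1 := by
      rw [conj_pow, hdd2, mul_one, mul_inv_cancel]
    have hne1 : g' * dd * g'⁻¹ ≠ 1 := by
      intro h1
      apply hdd1
      have h2 : dd = g'⁻¹ * (g' * dd * g'⁻¹) * g' := by group
      rw [h2, h1, mul_one, inv_mul_cancel]
    have h2μ : g ^ (μ * 2) = 1 := by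
      rw [zpow_mul, hμ, show ((2:ℤ)) = ((2:ℕ):ℤ) by norm_num, zpow_natCast, hsq]
    have hdvdμ : ((d:ℕ):ℤ) ∣ μ * 2 := by
      rw [hd]
      exact orderOf_dvd_iff_zpow_eq_one.mpr h2μ
    obtain ⟨t, ht⟩ := hdvdμ
    have hμt : μ = ((d/2 : ℕ):ℤ) * t := by
      have h42 : ((d:ℕ):ℤ) = 2 * ((d/2 : ℕ):ℤ) := by exact_mod_cast h2d.symm
      have h5 : μ * 2 = (((d/2:ℕ):ℤ) * t) * 2 := by rw [ht, h42]; ring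
      exact mul_right_cancel₀ (by norm_num) h5
    have hgm : g ^ μ = dd ^ t := by
      rw [hμt, zpow_mul, zpow_natCast, ← hdd]
    have hfin : g' * dd * g'⁻¹ = dd := by
      rcases Int.even_or_odd t with ⟨r, hr⟩ | ⟨r, hr⟩
      · exfalso
        apply hne1
        rw [← hμ, hgm, hr, show r + r = 2 * r by ring, zpow_mul,
          show ((2:ℤ)) = ((2:ℕ):ℤ) by norm_num, zpow_natCast, hdd2, one_zpow]
      · rw [← hμ, hgm, hr, zpow_add, zpow_one, zpow_mul,
          show ((2:ℤ)) = ((2:ℕ):ℤ) by norm_num, zpow_natCast, hdd2, one_zpow, one_mul]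
    calc g' * dd = (g' * dd * g'⁻¹) * g' := by group
    _ = dd * g' := by rw [hfin]
  obtain ⟨i2, hi2⟩ := Subgroup.mem_zpowers_iff.mp (hsmin dd hddcen hdd1)
  have hsdd : s = dd := by
    rcases Int.even_or_odd i2 with ⟨r, hr⟩ | ⟨r, hr⟩
    · exfalso
      apply hs1
      rw [← hi2, hr, show r + r = 2*r by ring, zpow_mul,
        show ((2:ℤ)) = ((2:ℕ):ℤ) by norm_num, zpow_natCast, hdd2, one_zpow]
    · rw [← hi2, hr, zpow_add, zpow_one, zpow_mul,
        show ((2:ℤ)) = ((2:ℕ):ℤ) by norm_num, zpow_natCast, hdd2, one_zpow, one_mul]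
  rcases hd48 with h4 | h8
  · exfalso
    apply h2S
    have h5 : g ^ (2:ℕ) = s := by
      rw [hsdd, hdd, show d/2 = 2 by omega]
    rw [h5]
    exact Subgroup.mem_zpowers s
  · constructor
    · exact hnorm
    constructor
    · exact h8
    · rw [hsdd, hdd, show d/2 = 4 by omega]

/-- The key step: all commutators lie in `zpowers s`. -/
lemma comm_mem (hZ : Subgroup.center G ≠ ⊥) :
    ∃ s : G, s ∈ Subgroup.center G ∧ (orderOf s).Prime ∧
      (∀ t : G, t ∈ Subgroup.center G → t ≠ 1 → s ∈ Subgroup.zpowers t) ∧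
      ∀ x y : G, y * x * y⁻¹ * x⁻¹ ∈ Subgroup.zpowers s := by
  obtain ⟨H, hH⟩ : ∃ H : Subgroup G, ¬H.Normal := by
    by_contra hno
    push_neg at hno
    exact hG.1 (fun T => hno T)
  obtain ⟨s, hsc, hsp, hsmin⟩ := exists_s hG hZ hH
  refine ⟨s, hsc, hsp, hsmin, ?_⟩
  by_contra hbad
  push_neg at hbad
  obtain ⟨x₀, y₀, hxy⟩ := hbad
  have hs1 : s ≠ 1 := by
    intro h1; rw [h1, orderOf_one] at hsp; exact hsp.ne_one rfl
  haveI hSnorm : (Subgroup.zpowers s).Normal := central_zpowers_normal hsc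
  have hSbot : Subgroup.zpowers s ≠ ⊥ := fun hb => hs1 (Subgroup.zpowers_eq_bot.mp hb)
  have hDed : IsDedekind (G ⧸ Subgroup.zpowers s) := hG.2 _ hSnorm hSbot
  have hnc : ((y₀:G ⧸ Subgroup.zpowers s)) * (x₀:G ⧸ Subgroup.zpowers s) *
      (y₀:G ⧸ Subgroup.zpowers s)⁻¹ * (x₀:G ⧸ Subgroup.zpowers s)⁻¹ ≠ 1 := by
    intro h1
    apply hxy
    rw [← QuotientGroup.eq_one_iff]
    push_cast
    exact h1
  obtain ⟨X, Y, hX4, hY4, hc1, hc2⟩ := dedekind_config hDed _ _ hnc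
  obtain ⟨x, hx⟩ := QuotientGroup.mk_surjective X
  obtain ⟨y, hy⟩ := QuotientGroup.mk_surjective Y
  -- basic facts about the lifts
  have hmkpow : ∀ (g : G) (n : ℕ), ((g ^ n : G) : G ⧸ Subgroup.zpowers s)
      = ((g : G ⧸ Subgroup.zpowers s)) ^ n := by
    intro g n
    have h1 := map_pow (QuotientGroup.mk' (Subgroup.zpowers s)) g n
    simpa [QuotientGroup.mk'_apply] using h1
  have hx4S : x ^ (4:ℕ) ∈ Subgroup.zpowers s := by
    rw [← QuotientGroup.eq_one_iff, hmkpow, hx, ← hX4, pow_orderOf_eq_one]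
  have hx2S : x ^ (2:ℕ) ∉ Subgroup.zpowers s := by
    intro hmem
    have h1 : ((x ^ (2:ℕ) : G) : G ⧸ Subgroup.zpowers s) = 1 :=
      (QuotientGroup.eq_one_iff _).mpr hmem
    rw [hmkpow, hx] at h1
    have h2 := orderOf_dvd_of_pow_eq_one h1
    rw [hX4] at h2
    norm_num at h2
  have hy4S : y ^ (4:ℕ) ∈ Subgroup.zpowers s := by
    rw [← QuotientGroup.eq_one_iff, hmkpow, hy, ← hY4, pow_orderOf_eq_one]
  have hy2S : y ^ (2:ℕ) ∉ Subgroup.zpowers s := by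
    intro hmem
    have h1 : ((y ^ (2:ℕ) : G) : G ⧸ Subgroup.zpowers s) = 1 :=
      (QuotientGroup.eq_one_iff _).mpr hmem
    rw [hmkpow, hy] at h1
    have h2 := orderOf_dvd_of_pow_eq_one h1
    rw [hY4] at h2
    norm_num at h2
  rcases hsp.eq_two_or_odd' with hp2 | hodd
  · -- p = 2 : full endgame
    obtain ⟨hxnorm, hx8, hx4s⟩ := lift_struct hG hH hsc hp2 hsmin x hx4S hx2S
    obtain ⟨hynorm, hy8, hy4s⟩ := lift_struct hG hH hsc hp2 hsmin y hy4S hy2S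
    -- C := commutator
    set C : G := y * x * y⁻¹ * x⁻¹ with hC
    have hmkc : ∀ a b : G, ((a * b : G) : G ⧸ Subgroup.zpowers s) =
        (a : G ⧸ Subgroup.zpowers s) * (b : G ⧸ Subgroup.zpowers s) := fun a b => rfl
    have hmki : ∀ a : G, ((a⁻¹ : G) : G ⧸ Subgroup.zpowers s) =
        (a : G ⧸ Subgroup.zpowers s)⁻¹ := fun a => rfl
    have hCmk : ((C : G) : G ⧸ Subgroup.zpowers s) = X ^ (2:ℕ) := by
      rw [hC, hmkc, hmkc, hmkc, hmki, hmki, hx, hy]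
      exact hc1
    have hCmk2 : ((C : G) : G ⧸ Subgroup.zpowers s) = Y ^ (2:ℕ) := by
      rw [hC, hmkc, hmkc, hmkc, hmki, hmki, hx, hy]
      exact hc2
    -- C = x^2 or x^6
    have hs2 : s ^ (2:ℕ) = 1 := by rw [← hp2]; exact pow_orderOf_eq_one s
    have hsinv : s⁻¹ = s := by
      apply inv_eq_of_mul_eq_one_right
      rw [← pow_two]
      exact hs2
    have hCval : C = x ^ (2:ℕ) ∨ C = x ^ (6:ℕ) := by
      have h1 : ((C:G): G ⧸ Subgroup.zpowers s) = ((x^(2:ℕ) : G) : G ⧸ Subgroup.zpowers s) := by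
        rw [hCmk, hmkpow, hx]
      have h2 : C⁻¹ * x^(2:ℕ) ∈ Subgroup.zpowers s := QuotientGroup.eq.mp h1
      obtain ⟨i, hi⟩ := Subgroup.mem_zpowers_iff.mp h2
      rcases Int.even_or_odd i with ⟨r, hr⟩ | ⟨r, hr⟩
      · left
        have h3 : s ^ i = 1 := by
          rw [hr, show r + r = 2*r by ring, zpow_mul,
            show ((2:ℤ)) = ((2:ℕ):ℤ) by norm_num, zpow_natCast, hs2, one_zpow]
        have h4 : C⁻¹ * x^(2:ℕ) = 1 := by rw [← hi, h3]
        exact (inv_mul_eq_one.mp h4)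
      · right
        have h3 : s ^ i = s := by
          rw [hr, zpow_add, zpow_one, zpow_mul,
            show ((2:ℤ)) = ((2:ℕ):ℤ) by norm_num, zpow_natCast, hs2, one_zpow, one_mul]
        have h4 : C⁻¹ * x^(2:ℕ) = s := by rw [← hi, h3]
        have h5 : C = x^(2:ℕ) * s⁻¹ := by
          rw [← h4]; group
        rw [h5, hsinv, ← hx4s, ← pow_add]
    -- C ∈ zpowers y
    have hCy : C ∈ Subgroup.zpowers y := by
      have h1 : ((C:G): G ⧸ Subgroup.zpowers s) = ((y^(2:ℕ) : G) : G ⧸ Subgroup.zpowers s) := by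
        rw [hCmk2, hmkpow, hy]
      have h2 : C⁻¹ * y^(2:ℕ) ∈ Subgroup.zpowers s := QuotientGroup.eq.mp h1
      have hSy : Subgroup.zpowers s ≤ Subgroup.zpowers y := by
        apply Subgroup.zpowers_le.mpr
        rw [← hy4s]
        exact Subgroup.pow_mem _ (Subgroup.mem_zpowers y) _
      have h3 : C⁻¹ * y^(2:ℕ) ∈ Subgroup.zpowers y := hSy h2
      have h4 : C⁻¹ ∈ Subgroup.zpowers y := by
        have h5 := (Subgroup.zpowers y).mul_mem h3
          ((Subgroup.zpowers y).inv_mem (Subgroup.pow_mem _ (Subgroup.mem_zpowers y) 2))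
        simpa [mul_assoc] using h5
      simpa using (Subgroup.zpowers y).inv_mem h4
    -- conjugation exponent
    obtain ⟨σ, hσ⟩ := Subgroup.mem_zpowers_iff.mp
      (hxnorm.conj_mem x (Subgroup.mem_zpowers x) y)
    have hCx : C = x ^ (σ - 1) := by
      rw [zpow_sub_one, hσ, hC]
    have hyC : y * C * y⁻¹ = C := by
      obtain ⟨t, htC⟩ := Subgroup.mem_zpowers_iff.mp hCy
      rw [← htC]; group
    have hyC2 : y * C * y⁻¹ = x ^ (σ * (σ - 1)) := by
      calc y * C * y⁻¹ = (y * x * y⁻¹) ^ (σ - 1) := by rw [hCx, conj_zpow]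
      _ = (x ^ σ) ^ (σ-1) := by rw [hσ]
      _ = x ^ (σ * (σ - 1)) := by rw [← zpow_mul]
    have h8dvd : ((8:ℤ)) ∣ (σ - 1)^2 := by
      have h5 : x ^ (σ * (σ-1)) = x ^ (σ - 1) := by rw [← hyC2, hyC, hCx]
      have h6 : x ^ (σ * (σ-1) - (σ-1)) = 1 := by rw [zpow_sub, h5, mul_inv_cancel]
      have h7 : (orderOf x : ℤ) ∣ (σ * (σ-1) - (σ-1)) := orderOf_dvd_iff_zpow_eq_one.mpr h6
      rw [hx8] at h7
      rw [show σ * (σ-1) - (σ-1) = (σ-1)^2 by ring] at h7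
      exact_mod_cast h7
    have hmod : ((8:ℤ) ∣ (σ - 1) - 2) ∨ ((8:ℤ) ∣ (σ-1) - 6) := by
      rcases hCval with h | h
      · left
        have h2 : x ^ ((2:ℤ)) = C := by
          rw [h, show ((2:ℤ)) = ((2:ℕ):ℤ) by norm_num, zpow_natCast]
        have h1 : x ^ ((σ-1) - 2) = 1 := by
          rw [zpow_sub, ← hCx, ← h2, mul_inv_cancel]
        have h3 := orderOf_dvd_iff_zpow_eq_one.mpr h1
        rw [hx8] at h3
        exact_mod_cast h3
      · right
        have h2 : x ^ ((6:ℤ)) = C := by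
          rw [h, show ((6:ℤ)) = ((6:ℕ):ℤ) by norm_num, zpow_natCast]
        have h1 : x ^ ((σ-1) - 6) = 1 := by
          rw [zpow_sub, ← hCx, ← h2, mul_inv_cancel]
        have h3 := orderOf_dvd_iff_zpow_eq_one.mpr h1
        rw [hx8] at h3
        exact_mod_cast h3
    obtain ⟨t, htd⟩ := h8dvd
    rcases hmod with ⟨m, hm⟩ | ⟨m, hm⟩
    · have hσ1 : σ - 1 = 8*m + 2 := by omega
      rw [hσ1] at htd
      set w : ℤ := m*m with hw
      have hxpd : (8*m+2)^2 = 8*(8*w+4*m) + 4 := by rw [hw]; ring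
      rw [hxpd] at htd
      omega
    · have hσ1 : σ - 1 = 8*m + 6 := by omega
      rw [hσ1] at htd
      set w : ℤ := m*m with hw
      have hxpd : (8*m+6)^2 = 8*(8*w+12*m+4) + 4 := by rw [hw]; ring
      rw [hxpd] at htd
      omega
  · -- p odd : coprime-order contradiction via a non-normal subgroup of order p
    -- xx := x ^ p has order 4
    have hxp4S : (x ^ (orderOf s)) ^ (4:ℕ) ∈ Subgroup.zpowers s := by
      rw [← pow_mul, mul_comm, pow_mul]
      exact Subgroup.pow_mem _ hx4S _
    have hx4p : (x ^ (orderOf s)) ^ (4:ℕ) = 1 := by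
      have h1 : (x ^ (4:ℕ)) ^ (orderOf s) = 1 := zpowers_pow_order hx4S
      rw [← pow_mul, mul_comm, pow_mul] at h1
      exact h1
    set xx := x ^ (orderOf s) with hxx
    have hxxmk : ((xx : G) : G ⧸ Subgroup.zpowers s) = X ^ (orderOf s) := by
      rw [hxx, hmkpow, hx]
    have hordXp : orderOf (X ^ (orderOf s)) = 4 := by
      rw [orderOf_pow' X hsp.pos.ne', hX4]
      have hC4 : Nat.Coprime (orderOf s) 4 := by
        apply (Nat.Prime.coprime_iff_not_dvd hsp).mpr
        intro hdvd
        have h2 : orderOf s ∣ 2 := hsp.dvd_of_dvd_pow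
          (by rw [show ((2:ℕ)^2) = 4 by norm_num]; exact hdvd)
        have h3 := Nat.le_of_dvd (by norm_num) h2
        obtain ⟨r, hr⟩ := hodd
        have h4 := hsp.two_le
        omega
      rw [Nat.Coprime.gcd_eq_one (Nat.Coprime.symm hC4)]
    have hord_xx : orderOf xx = 4 := by
      have hdvd1 : orderOf xx ∣ 4 := orderOf_dvd_of_pow_eq_one hx4p
      have hdvd2 : (4:ℕ) ∣ orderOf xx := by
        have h1 := orderOf_map_dvd (QuotientGroup.mk' (Subgroup.zpowers s)) xx
        rw [QuotientGroup.mk'_apply, hxxmk, hordXp] at h1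
        exact h1
      exact Nat.dvd_antisymm hdvd1 hdvd2
    have hxx1 : xx ≠ 1 := by
      intro h1; rw [h1, orderOf_one] at hord_xx; norm_num at hord_xx
    -- normality of zpowers xx
    have hxxnorm : (Subgroup.zpowers xx).Normal := by
      by_contra hnn
      have h1 := nonnormal_exponent hG hsc hs1 hnn xx (Subgroup.mem_zpowers xx)
      have hdvd := orderOf_dvd_of_pow_eq_one h1
      rw [hord_xx] at hdvd
      rcases hsp.eq_one_or_self_of_dvd _ hdvd with h2 | h2
      · norm_num at h2
      · obtain ⟨r, hr⟩ := hodd; omega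
    -- non-normal cyclic subgroup of order p
    obtain ⟨h, hhn, hhord⟩ := exists_nonnormal_small hG hsc hsp hH
    have hh1 : h ≠ 1 := by
      intro h1
      rw [h1, orderOf_one] at hhord
      exact hsp.ne_one hhord.symm
    -- coprime orders
    have hcop4p : Nat.Coprime (orderOf s) 4 := by
      apply (Nat.Prime.coprime_iff_not_dvd hsp).mpr
      intro hdvd
      have h2 : orderOf s ∣ 2 := hsp.dvd_of_dvd_pow
        (by rw [show ((2:ℕ)^2) = 4 by norm_num]; exact hdvd)
      have h3 := Nat.le_of_dvd (by norm_num) h2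
      obtain ⟨r, hr⟩ := hodd
      have h4 := hsp.two_le
      omega
    -- anything in both zpowers s - side and zpowers xx - side is trivial
    have hcopkill : ∀ v : G, v ^ (orderOf s) = 1 → v ^ (4:ℕ) = 1 → v = 1 := by
      intro v hv1 hv2
      have hd1 : orderOf v ∣ orderOf s := orderOf_dvd_of_pow_eq_one hv1
      have hd2 : orderOf v ∣ 4 := orderOf_dvd_of_pow_eq_one hv2
      have hd3 : orderOf v ∣ 1 := by
        rw [← Nat.Coprime.gcd_eq_one hcop4p]
        exact Nat.dvd_gcd hd1 hd2
      rw [Nat.dvd_one] at hd3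
      exact orderOf_eq_one_iff.mp hd3
    -- P ∩ (S ⊔ zpowers xx) = ⊥, pointwise
    have hPW0 : ∀ v : G, v ∈ Subgroup.zpowers h →
        v ∈ (Subgroup.zpowers s ⊔ Subgroup.zpowers xx) → v = 1 := by
      intro v hvP hvW
      by_contra hv1
      obtain ⟨ν, hν⟩ := Subgroup.mem_zpowers_iff.mp hvP
      have hhv : h ∈ Subgroup.zpowers v := by
        rw [← hν]
        exact mem_zpowers_zpow (by rw [hhord]; exact hsp) (by rw [hν]; exact hv1)
      have hhW : h ∈ Subgroup.zpowers s ⊔ Subgroup.zpowers xx :=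
        (Subgroup.zpowers_le.mpr hvW) hhv
      obtain ⟨s', hs', u, hu, heu⟩ := mem_sup_decomp hxxnorm hhW
      have hs'c : s' ∈ Subgroup.center G := Subgroup.zpowers_le.mpr hsc hs'
      have hcomm : Commute s' u := (Subgroup.mem_center_iff.mp hs'c u).symm
      have hs'p : s' ^ (orderOf s) = 1 := zpowers_pow_order hs'
      have hhp : h ^ (orderOf s) = 1 := by rw [← hhord]; exact pow_orderOf_eq_one h
      have hup : u ^ (orderOf s) = 1 := by
        have h1 : (s' * u) ^ (orderOf s) = 1 := by rw [← heu]; exact hhp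
        rw [hcomm.mul_pow, hs'p, one_mul] at h1
        exact h1
      have hu4 : u ^ (4:ℕ) = 1 := by
        have h1 : u ^ (orderOf xx) = 1 := zpowers_pow_order hu
        rw [hord_xx] at h1
        exact h1
      have hu1 : u = 1 := hcopkill u hup hu4
      -- h = s' is central, so zpowers h is normal - contradiction
      apply hhn
      apply central_zpowers_normal
      rw [heu, hu1, mul_one]
      exact hs'c
    -- P = (P ⊔ zpowers xx) ⊓ (P ⊔ zpowers s)
    have hn1 := sup_normal hG (Subgroup.zpowers h) (Subgroup.zpowers xx) hxxnorm
      (fun hb => hxx1 (Subgroup.zpowers_eq_bot.mp hb))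
    have hn2 := sup_normal hG (Subgroup.zpowers h) (Subgroup.zpowers s) hSnorm hSbot
    have hPP : Subgroup.zpowers h =
        (Subgroup.zpowers h ⊔ Subgroup.zpowers xx) ⊓ (Subgroup.zpowers h ⊔ Subgroup.zpowers s) := by
      apply le_antisymm
      · exact le_inf le_sup_left le_sup_left
      · intro g hg
        obtain ⟨t1, ht1, w1, hw1, he1⟩ := mem_sup_decomp hxxnorm hg.1
        obtain ⟨t2, ht2, w2, hw2, he2⟩ := mem_sup_decomp hSnorm hg.2
        have heq2 : t1 * w1 = t2 * w2 := he1.symm.trans he2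
        have hd : t2⁻¹ * t1 = w2 * w1⁻¹ := by
          calc t2⁻¹ * t1 = t2⁻¹ * (t1 * w1) * w1⁻¹ := by group
          _ = t2⁻¹ * (t2 * w2) * w1⁻¹ := by rw [heq2]
          _ = w2 * w1⁻¹ := by group
        have hmemP : t2⁻¹ * t1 ∈ Subgroup.zpowers h :=
          mul_mem (inv_mem ht2) ht1
        have hmemW : t2⁻¹ * t1 ∈ Subgroup.zpowers s ⊔ Subgroup.zpowers xx := by
          rw [hd]
          exact mul_mem (Subgroup.mem_sup_left hw2) (Subgroup.mem_sup_right (inv_mem hw1))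
        have h1 := hPW0 _ hmemP hmemW
        -- so t1 = t2 and w2 = w1
        have ht12 : t1 = t2 := by
          have h2 : t2⁻¹ * t1 = 1 := h1
          have h3 := inv_mul_eq_one.mp h2
          exact h3.symm
        have hww : w2 * w1⁻¹ = 1 := by rw [← hd]; exact h1
        have hw12 : w2 = w1 := mul_inv_eq_one.mp hww
        -- w1 ∈ zpowers xx ∩ zpowers s hence trivial
        have hw1p : w1 ^ (orderOf s) = 1 := zpowers_pow_order (hw12 ▸ hw2)
        have hw14 : w1 ^ (4:ℕ) = 1 := by
          have h4 : w1 ^ (orderOf xx) = 1 := zpowers_pow_order hw1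
          rw [hord_xx] at h4
          exact h4
        have hw1one : w1 = 1 := hcopkill w1 hw1p hw14
        rw [he1, hw1one, mul_one]
        exact ht1
    apply hhn
    rw [hPP]
    exact { conj_mem := fun n hn g => ⟨hn1.conj_mem n hn.1 g, hn2.conj_mem n hn.2 g⟩ }

end Endgame

end JNDAux

/-- A JND group with nontrivial center is a solvable JNA group. -/
theorem jnd_center_ne_bot_jna {G : Type*} [Group G] (hG : IsJND G)
    (hZ : Subgroup.center G ≠ ⊥) :
    IsJNA G ∧ IsSolvable G := by
  obtain ⟨s, hsc, hsp, hsmin, hcomm⟩ := JNDAux.comm_mem hG hZ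
  have hs1 : s ≠ 1 := by
    intro h1; rw [h1, orderOf_one] at hsp; exact hsp.ne_one rfl
  -- every nontrivial normal subgroup contains zpowers s
  have hSleN : ∀ (N : Subgroup G), N.Normal → N ≠ ⊥ → Subgroup.zpowers s ≤ N := by
    intro N hN hbot
    by_cases hNZ : ∃ t, t ∈ N ∧ t ∈ Subgroup.center G ∧ t ≠ 1
    · obtain ⟨t, htN, htc, ht1⟩ := hNZ
      exact le_trans (Subgroup.zpowers_le.mpr (hsmin t htc ht1)) (Subgroup.zpowers_le.mpr htN)
    · push_neg at hNZ
      exfalso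
      obtain ⟨n0, hn0N, hn0⟩ : ∃ n, n ∈ N ∧ n ≠ (1:G) := by
        by_contra hno
        push_neg at hno
        apply hbot
        ext g
        simp only [Subgroup.mem_bot]
        exact ⟨fun h => hno g h, fun h => h ▸ N.one_mem⟩
      have hn0c : n0 ∈ Subgroup.center G := by
        rw [Subgroup.mem_center_iff]
        intro g
        have h1 : g * n0 * g⁻¹ * n0⁻¹ ∈ N :=
          N.mul_mem (hN.conj_mem n0 hn0N g) (N.inv_mem hn0N)
        have h3 : g * n0 * g⁻¹ * n0⁻¹ ∈ Subgroup.center G :=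
          Subgroup.zpowers_le.mpr hsc (hcomm n0 g)
        have h4 : g * n0 * g⁻¹ * n0⁻¹ = 1 := hNZ _ h1 h3
        have h5 : (g * n0) * (n0 * g)⁻¹ = 1 := by
          rw [mul_inv_rev]
          calc g * n0 * (g⁻¹ * n0⁻¹) = g * n0 * g⁻¹ * n0⁻¹ := by group
          _ = 1 := h4
        exact mul_inv_eq_one.mp h5
      exact hn0 (hNZ n0 hn0N hn0c)
  have hJNA1 : ∃ a b : G, a * b ≠ b * a := by
    by_contra hno
    push_neg at hno
    exact hG.1 (fun T =>
      ⟨fun n hn g => by rw [hno g n, mul_assoc, mul_inv_cancel, mul_one]; exact hn⟩)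
  have hJNA2 : ∀ (N : Subgroup G) (hN : N.Normal), N ≠ ⊥ →
      letI := hN
      ∀ a b : G ⧸ N, a * b = b * a := by
    intro N hN hbot
    intro a b
    obtain ⟨g1, rfl⟩ := QuotientGroup.mk_surjective a
    obtain ⟨g2, rfl⟩ := QuotientGroup.mk_surjective b
    have h2 : ((g1 * g2 : G) : G ⧸ N) = ((g2 * g1 : G) : G ⧸ N) := by
      rw [QuotientGroup.eq]
      have h3 : (g1 * g2)⁻¹ * (g2 * g1) = g2⁻¹ * g1⁻¹ * (g2⁻¹)⁻¹ * (g1⁻¹)⁻¹ := by group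
      rw [h3]
      exact hSleN N hN hbot (hcomm g1⁻¹ g2⁻¹)
    calc (g1 : G ⧸ N) * (g2 : G ⧸ N) = ((g1 * g2 : G) : G ⧸ N) := rfl
    _ = ((g2 * g1 : G) : G ⧸ N) := h2
    _ = (g2 : G ⧸ N) * (g1 : G ⧸ N) := rfl
  have hcommS : commutator G ≤ Subgroup.zpowers s := by
    rw [commutator_def]
    apply Subgroup.commutator_le.mpr
    intro p hp q hq
    exact hcomm q p
  have hsolv : IsSolvable G := by
    refine ⟨⟨2, ?_⟩⟩
    have h1 : derivedSeries G 1 = commutator G := by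
      rw [derivedSeries_succ, derivedSeries_zero, ← commutator_def]
    show derivedSeries G 2 = ⊥
    rw [show (2:ℕ) = 1 + 1 by rfl, derivedSeries_succ, h1]
    rw [Subgroup.commutator_eq_bot_iff_le_centralizer]
    calc commutator G ≤ Subgroup.zpowers s := hcommS
    _ ≤ Subgroup.center G := Subgroup.zpowers_le.mpr hsc
    _ ≤ Subgroup.centralizer (commutator G) := Subgroup.center_le_centralizer _
  exact ⟨⟨hJNA1, hJNA2⟩, hsolv⟩
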